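/- Let G=(V,E) be a finite cubic simple graph (every vertex has degree 3) and v a natural number. Then G contains an independent set of cardinality at least v if and only if there exists a spin configuration S : V → {−1,1} such that E(S) ≤ |V|/2 − 4v (as rational numbers), where E(S) = ∑_{k∈V} S_k + ∑_{{k,l}∈E} S_k S_l. -/
import Mathlib


open Finset

/-- The edge term `f k * f l` as a function on unordered pairs. -/
def edgeTerm {V : Type*} (f : V → ℚ) : Sym2 V → ℚ :=
  Sym2.lift ⟨fun k l => f k * f l, fun k l => by ring⟩

/-- `E(S) = ∑_{k∈V} S_k + ∑_{{k,l}∈E} S_k S_l`. -/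
def En {V : Type*} [Fintype V] [DecidableEq V] (G : SimpleGraph V)
    [DecidableRel G.Adj] (S : V → ℚ) : ℚ :=
  (∑ k, S k) + ∑ e ∈ G.edgeFinset, edgeTerm S e

/-- The sum of `f` over the two endpoints of an unordered pair. -/
def pairSum {V : Type*} (f : V → ℚ) : Sym2 V → ℚ :=
  Sym2.lift ⟨fun k l => f k + f l, fun k l => by ring⟩

section Aux

variable {V : Type*} [Fintype V] [DecidableEq V] (G : SimpleGraph V) [DecidableRel G.Adj]

lemma dart_sum_eq_degree_sum (f : V → ℚ) :
    ∑ d : G.Dart, f d.fst = ∑ k, (G.degree k : ℚ) * f k := by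
  rw [← Finset.sum_fiberwise_of_maps_to (g := fun d : G.Dart => d.fst)
    (t := (Finset.univ : Finset V)) (fun d _ => Finset.mem_univ _)]
  refine Finset.sum_congr rfl fun v _ => ?_
  have h1 : ∀ d ∈ Finset.univ.filter (fun d : G.Dart => d.fst = v), f d.fst = f v := by
    intro d hd
    rw [Finset.mem_filter] at hd
    rw [hd.2]
  rw [Finset.sum_congr rfl h1, Finset.sum_const, ← G.dart_fst_fiber_card_eq_degree v]
  simp [nsmul_eq_mul, mul_comm]

lemma dart_sum_eq_edge_sum (f : V → ℚ) :
    ∑ d : G.Dart, f d.fst = ∑ e ∈ G.edgeFinset, pairSum f e := by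
  rw [← Finset.sum_fiberwise_of_maps_to (g := fun d : G.Dart => d.edge)
    (t := G.edgeFinset) (fun d _ => by rw [SimpleGraph.mem_edgeFinset]; exact d.edge_mem)]
  refine Finset.sum_congr rfl fun e he => ?_
  rw [SimpleGraph.mem_edgeFinset] at he
  induction e with
  | _ k l =>
    have hadj : G.Adj k l := he
    let d : G.Dart := ⟨(k, l), hadj⟩
    have hde : d.edge = s(k, l) := rfl
    have hfiber : Finset.univ.filter (fun d' : G.Dart => d'.edge = s(k, l)) = {d, d.symm} := by
      rw [← hde]
      exact d.edge_fiber
    rw [hfiber, Finset.sum_pair d.symm_ne.symm]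
    simp [pairSum, d, SimpleGraph.Dart.symm]

/-- Weighted handshake: sum over edges of endpoint sums equals degree-weighted vertex sum. -/
lemma edge_pairSum_eq (f : V → ℚ) :
    ∑ e ∈ G.edgeFinset, pairSum f e = ∑ k, (G.degree k : ℚ) * f k := by
  rw [← dart_sum_eq_edge_sum, dart_sum_eq_degree_sum]

/-- Energy formula for the spin configuration associated to a set `B`. -/
lemma En_spin_eq (hcubic : ∀ k, G.degree k = 3) (B : Finset V) :
    En G (fun k => if k ∈ B then 1 else -1) =
      (Fintype.card V : ℚ) / 2 - 4 * B.card +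
        4 * ((G.edgeFinset.filter fun e => ∀ x ∈ e, x ∈ B).card) := by
  classical
  set χ : V → ℚ := fun k => if k ∈ B then 1 else 0 with hχ
  set S : V → ℚ := fun k => if k ∈ B then 1 else -1 with hS
  set n : ℚ := (Fintype.card V : ℚ)
  set m : ℚ := (G.edgeFinset.card : ℚ)
  -- vertex sum
  have hvsum : ∑ k, S k = 2 * B.card - n := by
    have : ∀ k, S k = 2 * χ k - 1 := by
      intro k; simp only [hS, hχ]; split_ifs <;> ring
    rw [Finset.sum_congr rfl fun k _ => this k, Finset.sum_sub_distrib, ← Finset.mul_sum]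
    have hχsum : ∑ k, χ k = (B.card : ℚ) := by
      simp only [hχ, Finset.sum_boole, Finset.filter_mem_eq_inter, Finset.univ_inter]
    rw [hχsum]
    simp [n, Finset.card_univ]
  -- edge sum
  have hedge : ∀ e ∈ G.edgeFinset, edgeTerm S e = 4 * edgeTerm χ e - 2 * pairSum χ e + 1 := by
    intro e _
    induction e with
    | _ k l =>
      simp only [edgeTerm, pairSum, Sym2.lift_mk, hS, hχ]
      split_ifs <;> ring
  have hesum : ∑ e ∈ G.edgeFinset, edgeTerm S e =
      4 * (∑ e ∈ G.edgeFinset, edgeTerm χ e) - 2 * (∑ e ∈ G.edgeFinset, pairSum χ e) + m := by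
    rw [Finset.sum_congr rfl hedge]
    simp [Finset.sum_add_distrib, Finset.sum_sub_distrib, Finset.mul_sum, m]
  have hpair : ∑ e ∈ G.edgeFinset, pairSum χ e = 3 * B.card := by
    rw [edge_pairSum_eq]
    have : ∀ k, (G.degree k : ℚ) * χ k = 3 * χ k := by
      intro k; rw [hcubic k]; norm_num
    rw [Finset.sum_congr rfl fun k _ => this k, ← Finset.mul_sum]
    have hχsum : ∑ k, χ k = (B.card : ℚ) := by
      simp only [hχ, Finset.sum_boole, Finset.filter_mem_eq_inter, Finset.univ_inter]
    rw [hχsum]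
  have hprod : ∑ e ∈ G.edgeFinset, edgeTerm χ e =
      ((G.edgeFinset.filter fun e => ∀ x ∈ e, x ∈ B).card : ℚ) := by
    have : ∀ e ∈ G.edgeFinset, edgeTerm χ e = if (∀ x ∈ e, x ∈ B) then 1 else 0 := by
      intro e _
      induction e with
      | _ k l =>
        simp only [edgeTerm, Sym2.lift_mk, hχ, Sym2.mem_iff, forall_eq_or_imp, forall_eq]
        split_ifs with h1 h2 h3 <;> simp_all
    rw [Finset.sum_congr rfl this, Finset.sum_boole]
  have hm : 2 * m = 3 * n := by
    have h1 : ∑ k, G.degree k = 2 * G.edgeFinset.card := G.sum_degrees_eq_twice_card_edges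
    have h2 : ∑ k, G.degree k = 3 * Fintype.card V := by
      rw [Finset.sum_congr rfl fun k _ => hcubic k]
      simp [Finset.card_univ, mul_comm]
    have := h2 ▸ h1
    have : (3 * Fintype.card V : ℕ) = 2 * G.edgeFinset.card := this
    have := congrArg (fun x : ℕ => (x : ℚ)) this
    push_cast at this
    simp only [m, n]
    linarith
  simp only [En]
  rw [hvsum, hesum, hpair, hprod]
  have hn : n = (Fintype.card V : ℚ) := rfl
  linarith

/-- Extraction of an independent set from an arbitrary set. -/
lemma extract_indep (B : Finset V) :
    ∃ V' : Finset V, (∀ k ∈ V', ∀ l ∈ V', ¬ G.Adj k l) ∧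
      B.card ≤ V'.card + (G.edgeFinset.filter fun e => ∀ x ∈ e, x ∈ B).card := by
  classical
  induction B using Finset.strongInduction with
  | _ B ih =>
    by_cases h : ∀ k ∈ B, ∀ l ∈ B, ¬ G.Adj k l
    · exact ⟨B, h, Nat.le_add_right _ _⟩
    · push_neg at h
      obtain ⟨k, hk, l, hl, hadj⟩ := h
      obtain ⟨V', hV', hcard⟩ := ih (B.erase k) (Finset.erase_ssubset hk)
      refine ⟨V', hV', ?_⟩
      have hmem : s(k, l) ∈ G.edgeFinset.filter fun e => ∀ x ∈ e, x ∈ B := by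
        rw [Finset.mem_filter, SimpleGraph.mem_edgeFinset]
        exact ⟨hadj, by simp only [Sym2.mem_iff]; rintro x (rfl | rfl) <;> assumption⟩
      have hsub : (G.edgeFinset.filter fun e => ∀ x ∈ e, x ∈ B.erase k) ⊆
          (G.edgeFinset.filter fun e => ∀ x ∈ e, x ∈ B).erase s(k, l) := by
        intro e he
        rw [Finset.mem_filter] at he
        rw [Finset.mem_erase, Finset.mem_filter]
        refine ⟨?_, he.1, fun x hx => Finset.mem_of_mem_erase (he.2 x hx)⟩
        intro hekl
        have : k ∈ e := by rw [hekl]; simp [Sym2.mem_iff]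
        exact (Finset.notMem_erase k B) (he.2 k this)
      have h1 : (G.edgeFinset.filter fun e => ∀ x ∈ e, x ∈ B.erase k).card + 1 ≤
          (G.edgeFinset.filter fun e => ∀ x ∈ e, x ∈ B).card := by
        calc _ ≤ ((G.edgeFinset.filter fun e => ∀ x ∈ e, x ∈ B).erase s(k,l)).card + 1 :=
              Nat.add_le_add_right (Finset.card_le_card hsub) 1
          _ = _ := Finset.card_erase_add_one hmem
      have h2 : (B.erase k).card + 1 = B.card := Finset.card_erase_add_one hk
      omega

end Aux

/-- For a cubic graph `G`, there is an independent set of cardinality at least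
`v` iff there is a spin configuration `S : V → {−1,1}` with
`E(S) ≤ |V|/2 − 4v`. -/
theorem indepSet_iff_exists_spin_En_le {V : Type*} [Fintype V] [DecidableEq V]
    (G : SimpleGraph V) [DecidableRel G.Adj]
    (hcubic : ∀ k, G.degree k = 3) (v : ℕ) :
    (∃ V' : Finset V, (∀ k ∈ V', ∀ l ∈ V', ¬ G.Adj k l) ∧ v ≤ V'.card) ↔
      (∃ S : V → ℚ, (∀ k, S k = -1 ∨ S k = 1) ∧
        En G S ≤ (Fintype.card V : ℚ) / 2 - 4 * v) := by
  constructor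
  · rintro ⟨V', hind, hv⟩
    refine ⟨fun k => if k ∈ V' then 1 else -1, fun k => by by_cases h : k ∈ V' <;> simp [h], ?_⟩
    rw [En_spin_eq G hcubic V']
    have hempty : (G.edgeFinset.filter fun e => ∀ x ∈ e, x ∈ V') = ∅ := by
      rw [Finset.eq_empty_iff_forall_notMem]
      intro e he
      rw [Finset.mem_filter, SimpleGraph.mem_edgeFinset] at he
      induction e with
      | _ k l =>
        have hk : k ∈ V' := he.2 k (by simp [Sym2.mem_iff])
        have hl : l ∈ V' := he.2 l (by simp [Sym2.mem_iff])
        exact hind k hk l hl he.1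
    rw [hempty]
    have : (v : ℚ) ≤ (V'.card : ℚ) := by exact_mod_cast hv
    simp only [Finset.card_empty, Nat.cast_zero, mul_zero, add_zero]
    linarith
  · rintro ⟨S, hS, hle⟩
    classical
    set B : Finset V := Finset.univ.filter (fun k => S k = 1) with hB
    have hSeq : S = fun k => if k ∈ B then 1 else -1 := by
      funext k
      simp only [hB, Finset.mem_filter, Finset.mem_univ, true_and]
      rcases hS k with h | h <;> rw [h] <;> norm_num
    rw [hSeq, En_spin_eq G hcubic B] at hle
    obtain ⟨V', hV', hcard⟩ := extract_indep G B
    refine ⟨V', hV', ?_⟩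
    set e := (G.edgeFinset.filter fun e => ∀ x ∈ e, x ∈ B).card
    have hq : (v : ℚ) + (e : ℚ) ≤ (B.card : ℚ) := by linarith
    have hn : v + e ≤ B.card := by exact_mod_cast hq
    omega
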